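/- For the Charlier weight ω(k) = z^k/k! on the lattice ℕ with z > 0, the zeroth moment is μ_0(z) = Σ_{k=0}^∞ z^k/k! = e^z, and for every n ≥ 1 the Hankel determinant equals Δ_n(z) = z^{n(n−1)/2} e^{nz} ∏_{k=1}^{n−1} k!. -/

import Mathlib

/-- The Euler operator `δ_z = z · d/dz` acting on functions `ℝ → ℝ`. -/
noncomputable def eulerOp (f : ℝ → ℝ) : ℝ → ℝ := fun z => z * deriv f z

/-- The `n × n` Wronskian-type determinant `W_n(ψ)(z) = det[δ_z^{i+j}(ψ)(z)]_{i,j=0}^{n-1}`,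
with `W_0 = 1`. -/
noncomputable def Wdet (n : ℕ) (ψ : ℝ → ℝ) (z : ℝ) : ℝ :=
  Matrix.det (Matrix.of fun i j : Fin n => eulerOp^[(i : ℕ) + (j : ℕ)] ψ z)

/-- The Hankel determinant `Δ_n(z) = det[μ_{i+j}(z)]_{i,j=0}^{n-1}`, with `Δ_0 = 1`. -/
noncomputable def hankel (μ : ℕ → ℝ → ℝ) (n : ℕ) (z : ℝ) : ℝ :=
  Matrix.det (Matrix.of fun i j : Fin n => μ ((i : ℕ) + (j : ℕ)) z)

/-- The shifted Hankel determinant `Δ̃_n(z)`: the determinant of `[μ_{i+j}(z)]_{i,j=0}^{n-1}`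
with its last column `(μ_{i+n-1})_i` replaced by `(μ_{i+n})_i`, and `Δ̃_0 = 0`. -/
noncomputable def hankelShift (μ : ℕ → ℝ → ℝ) : ℕ → ℝ → ℝ
  | 0, _ => 0
  | (m + 1), z => Matrix.det (Matrix.of fun i j : Fin (m + 1) =>
      if (j : ℕ) = m then μ ((i : ℕ) + m + 1) z else μ ((i : ℕ) + (j : ℕ)) z)

/-- The recurrence coefficient `a_n²(z) = Δ_{n+1}(z) Δ_{n-1}(z) / Δ_n(z)²`, with
`a_0² = 0` (since `Δ_{-1} = 0`). -/
noncomputable def aSq (μ : ℕ → ℝ → ℝ) : ℕ → ℝ → ℝ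
  | 0, _ => 0
  | (m + 1), z => hankel μ (m + 2) z * hankel μ m z / (hankel μ (m + 1) z) ^ 2

/-- The recurrence coefficient `b_n(z) = Δ̃_{n+1}(z)/Δ_{n+1}(z) − Δ̃_n(z)/Δ_n(z)`. -/
noncomputable def bCoef (μ : ℕ → ℝ → ℝ) (n : ℕ) (z : ℝ) : ℝ :=
  hankelShift μ (n + 1) z / hankel μ (n + 1) z - hankelShift μ n z / hankel μ n z

/-- The `k`-th moment of the Charlier weight `ω(j) = z^j / j!` on the lattice `ℕ`:
`μ_k(z) = Σ_{j=0}^∞ j^k z^j / j!`. -/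
noncomputable def charlierMoment (k : ℕ) (z : ℝ) : ℝ :=
  ∑' j : ℕ, (j : ℝ) ^ k * z ^ j / (Nat.factorial j : ℝ)

open scoped Matrix


lemma dF_shift (s k : ℕ) (z : ℝ) :
    ((s + k).descFactorial k : ℝ) * z ^ (s + k) / (s + k).factorial
      = z ^ k * (z ^ s / s.factorial) := by
  have h1 : ((s+k).descFactorial k : ℝ) = (s+k).factorial / s.factorial := by
    rw [Nat.descFactorial_eq_factorial_mul_choose]
    have := Nat.choose_mul_factorial_mul_factorial (Nat.le_add_left k s)
    have hs : (s + k - k) = s := by omega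
    rw [hs] at this
    field_simp
    push_cast [← this]
    ring
  rw [h1, pow_add]
  have h2 : ((s+k).factorial : ℝ) ≠ 0 := Nat.cast_ne_zero.2 (Nat.factorial_ne_zero _)
  have h3 : ((s).factorial : ℝ) ≠ 0 := Nat.cast_ne_zero.2 (Nat.factorial_ne_zero _)
  field_simp

lemma summable_dF (k : ℕ) (z : ℝ) :
    Summable (fun t : ℕ => (t.descFactorial k : ℝ) * z ^ t / t.factorial) := by
  rw [← summable_nat_add_iff k]
  simp only [dF_shift]
  exact (Real.summable_pow_div_factorial z).mul_left _

lemma tsum_dF (k : ℕ) (z : ℝ) :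
    ∑' t : ℕ, (t.descFactorial k : ℝ) * z ^ t / t.factorial = z ^ k * Real.exp z := by
  rw [← (summable_dF k z).sum_add_tsum_nat_add k]
  have h0 : ∀ t ∈ Finset.range k, (t.descFactorial k : ℝ) * z ^ t / t.factorial = 0 := by
    intro t ht
    rw [Nat.descFactorial_eq_zero_iff_lt.2 (Finset.mem_range.1 ht)]
    simp
  rw [Finset.sum_eq_zero h0, zero_add]
  simp only [dF_shift]
  rw [tsum_mul_left, Real.exp_eq_exp_ℝ, NormedSpace.exp_eq_tsum_div]

-- the Gram series shifted by l, expanded via Vandermonde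
lemma G_shift (k l : ℕ) (z : ℝ) (s : ℕ) :
    ((s+l).descFactorial k : ℝ) * ((s+l).descFactorial l : ℝ) * z ^ (s+l) / (s+l).factorial
      = ∑ m ∈ Finset.range (k+1),
          ((k.factorial : ℝ) * (l.choose (k-m)) / m.factorial * z ^ l)
            * ((s.descFactorial m : ℝ) * z ^ s / s.factorial) := by
  have h1 : ((s+l).descFactorial k : ℝ) * ((s+l).descFactorial l : ℝ) * z ^ (s+l) / (s+l).factorial
      = ((s+l).descFactorial k : ℝ) * (((s+l).descFactorial l : ℝ) * z ^ (s+l) / (s+l).factorial) := by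
    ring
  rw [h1, dF_shift]
  have h2 : ((s+l).descFactorial k : ℝ)
      = (k.factorial : ℝ) * ∑ m ∈ Finset.range (k+1), (s.choose m : ℝ) * (l.choose (k-m) : ℝ) := by
    rw [Nat.descFactorial_eq_factorial_mul_choose, Nat.add_choose_eq,
      Finset.Nat.sum_antidiagonal_eq_sum_range_succ_mk]
    push_cast
    simp [Nat.succ_eq_add_one]
  rw [h2, Finset.mul_sum, Finset.sum_mul]
  refine Finset.sum_congr rfl fun m hm => ?_
  have hc : (s.choose m : ℝ) = (s.descFactorial m : ℝ) / m.factorial := by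
    rw [Nat.descFactorial_eq_factorial_mul_choose]
    push_cast
    field_simp
  rw [hc]
  have h3 : (m.factorial : ℝ) ≠ 0 := Nat.cast_ne_zero.2 (Nat.factorial_ne_zero _)
  have h4 : ((s).factorial : ℝ) ≠ 0 := Nat.cast_ne_zero.2 (Nat.factorial_ne_zero _)
  field_simp

lemma summable_G (k l : ℕ) (z : ℝ) :
    Summable (fun t : ℕ =>
      (t.descFactorial k : ℝ) * (t.descFactorial l : ℝ) * z ^ t / t.factorial) := by
  rw [← summable_nat_add_iff l]
  simp only [G_shift]
  exact summable_sum fun m _ => (summable_dF m z).mul_left _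

lemma tsum_G (k l : ℕ) (z : ℝ) :
    ∑' t : ℕ, (t.descFactorial k : ℝ) * (t.descFactorial l : ℝ) * z ^ t / t.factorial
      = ∑ m ∈ Finset.range (k+1),
          (k.choose m : ℝ) * m.factorial * (l.choose m) * z ^ (k-m) * z ^ l * Real.exp z := by
  rw [← (summable_G k l z).sum_add_tsum_nat_add l]
  have h0 : ∀ t ∈ Finset.range l,
      (t.descFactorial k : ℝ) * (t.descFactorial l : ℝ) * z ^ t / t.factorial = 0 := by
    intro t ht
    rw [Nat.descFactorial_eq_zero_iff_lt.2 (Finset.mem_range.1 ht)]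
    simp
  rw [Finset.sum_eq_zero h0, zero_add]
  simp only [G_shift]
  rw [Summable.tsum_finsetSum (fun m _ => (summable_dF m z).mul_left _)]
  rw [← Finset.sum_range_reflect]
  refine Finset.sum_congr rfl fun m hm => ?_
  have hmk : m ≤ k := by
    have := Finset.mem_range.1 hm; omega
  have hkk : k + 1 - 1 - m = k - m := by omega
  rw [hkk, tsum_mul_left, tsum_dF]
  have h5 : k - (k - m) = m := by omega
  rw [h5]
  -- now: k! * C(l,m)/ (k-m)! * z^l * (z^(k-m) * exp z) = C(k,m)*m!*C(l,m)*z^(k-m)*z^l*exp z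
  have hfac : (k.factorial : ℝ) = (k.choose m : ℝ) * m.factorial * (k-m).factorial := by
    have := Nat.choose_mul_factorial_mul_factorial hmk
    push_cast [← this]; ring
  rw [hfac]
  have h3 : ((k-m).factorial : ℝ) ≠ 0 := Nat.cast_ne_zero.2 (Nat.factorial_ne_zero _)
  field_simp


def St : ℕ → ℕ → ℕ
  | 0, 0 => 1
  | 0, _+1 => 0
  | _+1, 0 => 0
  | (n+1), (k+1) => (k+1) * St n (k+1) + St n k

lemma St_eq_zero : ∀ m k, m < k → St m k = 0 := by
  intro m
  induction m with
  | zero => intro k hk; match k, hk with | (j+1), _ => rfl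
  | succ n ih =>
    intro k hk
    match k, hk with
    | (j+1), hk =>
      show (j+1) * St n (j+1) + St n j = 0
      rw [ih (j+1) (by omega), ih j (by omega)]
      simp

lemma St_diag : ∀ m, St m m = 1 := by
  intro m
  induction m with
  | zero => rfl
  | succ n ih =>
    show (n+1) * St n (n+1) + St n n = 1
    rw [St_eq_zero n (n+1) (by omega), ih]
    simp

lemma cast_mul_dF (t k : ℕ) :
    (t:ℝ) * t.descFactorial k = t.descFactorial (k+1) + k * t.descFactorial k := by
  rcases lt_or_ge t k with h | h
  · rw [Nat.descFactorial_eq_zero_iff_lt.2 h,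
      Nat.descFactorial_eq_zero_iff_lt.2 (by omega : t < k+1)]
    simp
  · rw [Nat.descFactorial_succ]
    push_cast [Nat.cast_sub h]
    ring

lemma pow_eq_sum_St (m t : ℕ) :
    (t:ℝ)^m = ∑ k ∈ Finset.range (m+1), (St m k : ℝ) * t.descFactorial k := by
  induction m with
  | zero => simp [St]
  | succ n ih =>
    have step : ((t:ℝ))^(n+1) = (t:ℝ) * (t:ℝ)^n := by ring
    rw [step, ih, Finset.mul_sum]
    have h1 : ∀ k, (t:ℝ) * ((St n k : ℝ) * t.descFactorial k)
        = (St n k : ℝ) * t.descFactorial (k+1) + (k * St n k : ℝ) * t.descFactorial k := by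
      intro k
      rw [← mul_assoc, mul_comm (t:ℝ) (St n k : ℝ), mul_assoc, cast_mul_dF]
      push_cast
      ring
    simp only [h1]
    rw [Finset.sum_add_distrib]
    have h2 : ∑ k ∈ Finset.range (n+1), ((k : ℝ) * St n k) * t.descFactorial k
        = ∑ k ∈ Finset.range (n+1), ((k+1 : ℝ) * St n (k+1)) * t.descFactorial (k+1) := by
      rw [Finset.sum_range_succ' (fun k => ((k : ℝ) * St n k) * t.descFactorial k) n,
        Finset.sum_range_succ (fun k => (((k:ℝ)+1) * St n (k+1)) * t.descFactorial (k+1)) n]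
      push_cast
      rw [St_eq_zero n (n+1) (by omega)]
      simp
    rw [h2, ← Finset.sum_add_distrib]
    rw [Finset.sum_range_succ' (fun k => (St (n+1) k : ℝ) * t.descFactorial k) (n+1)]
    have h3 : St (n+1) 0 = 0 := rfl
    rw [h3]
    simp only [Nat.cast_zero, zero_mul, add_zero]
    refine Finset.sum_congr rfl fun k _ => ?_
    have h4 : (St (n+1) (k+1) : ℝ) = (k+1) * St n (k+1) + St n k := by
      rw [show St (n+1) (k+1) = (k+1) * St n (k+1) + St n k from rfl]
      push_cast
      ring
    rw [h4]
    ring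

lemma pow_eq_sum_St' (m t n : ℕ) (h : m < n) :
    (t:ℝ)^m = ∑ k ∈ Finset.range n, (St m k : ℝ) * t.descFactorial k := by
  rw [pow_eq_sum_St]
  refine Finset.sum_subset (by intro x hx; simp at *; omega) ?_
  intro x _ hx
  rw [St_eq_zero m x (by simp at hx; omega)]
  simp

noncomputable def Amat (n : ℕ) : Matrix (Fin n) (Fin n) ℝ :=
  Matrix.of fun i k => (St i k : ℝ)

noncomputable def Bmat (n : ℕ) (z : ℝ) : Matrix (Fin n) (Fin n) ℝ :=
  Matrix.of fun k m => (Nat.choose k m : ℝ) * z ^ ((k:ℕ) - (m:ℕ))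

noncomputable def Dmat (n : ℕ) (z : ℝ) : Matrix (Fin n) (Fin n) ℝ :=
  Matrix.diagonal fun m => (Nat.factorial m : ℝ) * z ^ (m:ℕ) * Real.exp z

lemma BDB_entry (n : ℕ) (z : ℝ) (k l : Fin n) :
    (Bmat n z * Dmat n z * (Bmat n z)ᵀ) k l
      = ∑' t : ℕ, ((t.descFactorial k : ℝ) * (t.descFactorial l : ℝ) * z ^ t / t.factorial) := by
  rw [tsum_G]
  have he : (Bmat n z * Dmat n z * (Bmat n z)ᵀ) k l
      = ∑ m : Fin n, ((k:ℕ).choose m * z ^ ((k:ℕ)-(m:ℕ)) * ((m:ℕ).factorial * z ^ (m:ℕ) * Real.exp z))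
          * ((l:ℕ).choose m * z ^ ((l:ℕ)-(m:ℕ))) := by
    rw [Matrix.mul_apply]
    refine Finset.sum_congr rfl fun m _ => ?_
    simp only [Dmat, Matrix.mul_diagonal, Matrix.transpose_apply, Bmat, Matrix.of_apply]
  rw [he]
  rw [Fin.sum_univ_eq_sum_range (fun m =>
    ((k:ℕ).choose m * z ^ ((k:ℕ)-m) * (m.factorial * z ^ m * Real.exp z))
      * ((l:ℕ).choose m * z ^ ((l:ℕ)-m)))]
  rw [← Finset.sum_subset (Finset.range_subset_range.2 (by omega : (k:ℕ)+1 ≤ n))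
    (fun m _ hm => by
      rw [Nat.choose_eq_zero_of_lt (by simp at hm ⊢; omega : (k:ℕ) < m)]
      simp)]
  refine (Finset.sum_congr rfl fun m hm => ?_).symm
  rcases le_or_gt m (l:ℕ) with h | h
  · have : z ^ (m:ℕ) * z ^ ((l:ℕ)-m) = z ^ (l:ℕ) := by
      rw [← pow_add]; congr 1; omega
    rw [← this]
    ring
  · rw [Nat.choose_eq_zero_of_lt h]
    simp

lemma hankel_entry (n : ℕ) (z : ℝ) (i j : Fin n) :
    charlierMoment ((i:ℕ)+(j:ℕ)) z
      = (Amat n * (Bmat n z * Dmat n z * (Bmat n z)ᵀ) * (Amat n)ᵀ) i j := by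
  have hAXA : (Amat n * (Bmat n z * Dmat n z * (Bmat n z)ᵀ) * (Amat n)ᵀ) i j
      = ∑ k : Fin n, ∑ l : Fin n, (St i k : ℝ) * (St j l : ℝ)
          * ∑' t : ℕ, ((t.descFactorial (k:ℕ) : ℝ) * (t.descFactorial (l:ℕ) : ℝ)
              * z ^ t / t.factorial) := by
    set X := Bmat n z * Dmat n z * (Bmat n z)ᵀ with hXdef
    simp only [Matrix.mul_apply, Matrix.transpose_apply, Finset.sum_mul]
    rw [Finset.sum_comm]
    refine Finset.sum_congr rfl fun k _ => Finset.sum_congr rfl fun l _ => ?_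
    rw [show X k l = ∑' t : ℕ, ((t.descFactorial (k:ℕ) : ℝ) * (t.descFactorial (l:ℕ) : ℝ)
        * z ^ t / t.factorial) from BDB_entry n z k l]
    simp only [Amat, Matrix.of_apply]
    ring
  rw [hAXA]
  have hfin : ∀ g : ℕ → ℕ → ℝ,
      (∑ k : Fin n, ∑ l : Fin n, g k l)
        = ∑ k ∈ Finset.range n, ∑ l ∈ Finset.range n, g k l := by
    intro g
    rw [Fin.sum_univ_eq_sum_range (fun k => ∑ l : Fin n, g k l) n]
    exact Finset.sum_congr rfl fun k _ => Fin.sum_univ_eq_sum_range (fun l => g k l) n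
  rw [hfin (fun k l => (St i k : ℝ) * (St j l : ℝ)
      * ∑' t : ℕ, ((t.descFactorial k : ℝ) * (t.descFactorial l : ℝ) * z ^ t / t.factorial))]
  have hpt : ∀ t : ℕ, (t:ℝ)^((i:ℕ)+(j:ℕ)) * z^t / t.factorial
      = ∑ k ∈ Finset.range n, ∑ l ∈ Finset.range n,
          (St i k : ℝ) * (St j l : ℝ)
            * ((t.descFactorial k : ℝ) * (t.descFactorial l : ℝ) * z^t / t.factorial) := by
    intro t
    rw [pow_add, pow_eq_sum_St' (i:ℕ) t n i.isLt, pow_eq_sum_St' (j:ℕ) t n j.isLt,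
      Finset.sum_mul_sum, Finset.sum_mul, Finset.sum_div]
    refine Finset.sum_congr rfl fun k _ => ?_
    rw [Finset.sum_mul, Finset.sum_div]
    refine Finset.sum_congr rfl fun l _ => ?_
    ring
  show (∑' t : ℕ, (t:ℝ)^((i:ℕ)+(j:ℕ)) * z^t / t.factorial) = _
  rw [tsum_congr hpt,
    Summable.tsum_finsetSum (fun k _ => summable_sum (fun l _ => ((summable_G k l z).mul_left _)))]
  refine Finset.sum_congr rfl fun k _ => ?_
  rw [Summable.tsum_finsetSum (fun l _ => ((summable_G k l z).mul_left _))]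
  exact Finset.sum_congr rfl fun l _ => tsum_mul_left

lemma det_Amat (n : ℕ) : (Amat n).det = 1 := by
  rw [Matrix.det_of_lowerTriangular (Amat n)
    (fun i j h => by
      simp only [Amat, Matrix.of_apply]
      rw [St_eq_zero _ _ (by exact_mod_cast h)]
      simp)]
  simp [Amat, St_diag]

lemma det_Bmat (n : ℕ) (z : ℝ) : (Bmat n z).det = 1 := by
  rw [Matrix.det_of_lowerTriangular (Bmat n z)
    (fun i j h => by
      simp only [Bmat, Matrix.of_apply]
      rw [Nat.choose_eq_zero_of_lt (by exact_mod_cast h)]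
      simp)]
  simp [Bmat]


/-- For the Charlier weight `ω(k) = z^k/k!` with `z > 0`, the zeroth moment is
`μ_0(z) = e^z` and for every `n ≥ 1` the Hankel determinant is
`Δ_n(z) = z^{n(n−1)/2} e^{nz} ∏_{k=1}^{n−1} k!`. -/
theorem charlier_moment_and_hankel (z : ℝ) (hz : 0 < z) :
    charlierMoment 0 z = Real.exp z ∧
    ∀ n : ℕ, 1 ≤ n →
      hankel charlierMoment n z
        = z ^ (n * (n - 1) / 2) * Real.exp ((n : ℝ) * z)
            * ∏ k ∈ Finset.Icc 1 (n - 1), (Nat.factorial k : ℝ) := by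
  constructor
  · show (∑' t : ℕ, (t:ℝ)^0 * z^t / t.factorial) = _
    simp only [pow_zero, one_mul]
    rw [Real.exp_eq_exp_ℝ, NormedSpace.exp_eq_tsum_div]
  · intro n hn
    have hmat : (Matrix.of fun i j : Fin n => charlierMoment ((i:ℕ)+(j:ℕ)) z)
        = Amat n * (Bmat n z * Dmat n z * (Bmat n z)ᵀ) * (Amat n)ᵀ := by
      ext i j
      exact hankel_entry n z i j
    rw [hankel, hmat]
    rw [Matrix.det_mul, Matrix.det_mul, Matrix.det_mul, Matrix.det_mul,
      Matrix.det_transpose, Matrix.det_transpose, det_Amat, det_Bmat]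
    have hD : (Dmat n z).det = ∏ m : Fin n, ((m:ℕ).factorial : ℝ) * z^(m:ℕ) * Real.exp z := by
      rw [Dmat, Matrix.det_diagonal]
    rw [hD]
    rw [Finset.prod_mul_distrib, Finset.prod_mul_distrib]
    have h1 : ∏ m : Fin n, z^(m:ℕ) = z ^ (n * (n-1) / 2) := by
      rw [Finset.prod_pow_eq_pow_sum]
      congr 1
      rw [Fin.sum_univ_eq_sum_range (fun m => m) n, Finset.sum_range_id]
    have h2 : ∏ _m : Fin n, Real.exp z = Real.exp ((n:ℝ) * z) := by
      rw [Finset.prod_const, Real.exp_nat_mul]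
      simp
    have h3 : ∏ m : Fin n, ((m:ℕ).factorial : ℝ)
        = ∏ k ∈ Finset.Icc 1 (n-1), (Nat.factorial k : ℝ) := by
      rw [Fin.prod_univ_eq_prod_range (fun m => (Nat.factorial m : ℝ)) n]
      refine (Finset.prod_subset (fun x hx => ?_) (fun x hx hx' => ?_)).symm
      · simp only [Finset.mem_Icc, Finset.mem_range] at *
        omega
      · simp only [Finset.mem_Icc, Finset.mem_range] at hx hx'
        have : x = 0 := by omega
        subst this
        simp
    rw [h1, h2, h3]
    ring
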